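/- Let f : [0,∞) → ℝ be concave, non-decreasing and satisfy f(0) = 0. Then for every X ∈ ℝ^{m×n} and every k ≥ rank(X), R(X) = min { Σ_{i=1}^{k} f(‖B_i‖·‖C_i‖) : B ∈ ℝ^{m×k}, C ∈ ℝ^{n×k}, BCᵀ = X }, where B_i and C_i denote the i-th columns of B and C; in particular the minimum over all such factorizations is attained. -/

import Mathlib

noncomputable section
open Matrix Real

theorem Matrix.isHermitian_transpose_mul_self {m n : Type*} {α : Type*} [Fintype m]
    [CommSemiring α] [StarRing α] [TrivialStar α] (A : Matrix m n α) :
    (Aᵀ * A).IsHermitian := by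
  rw [IsHermitian, conjTranspose_mul, conjTranspose_eq_transpose_of_trivial,
    conjTranspose_eq_transpose_of_trivial, transpose_transpose]

/-- The singular values of a real `m × n` matrix, in descending order,
indexed by `Fin (min m n)`: square roots of the eigenvalues of `Xᴴ * X`. -/
def sVal {m n : ℕ} (X : Matrix (Fin m) (Fin n) ℝ) (i : Fin (min m n)) : ℝ :=
  Real.sqrt ((Matrix.isHermitian_transpose_mul_self X).eigenvalues
    (Tuple.sort (fun j => -(Matrix.isHermitian_transpose_mul_self X).eigenvalues j)
      (Fin.castLE (Nat.min_le_right m n) i)))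

def regR {m n : ℕ} (f : ℝ → ℝ) (X : Matrix (Fin m) (Fin n) ℝ) : ℝ :=
  ∑ i, f (sVal X i)

def colNormSq {m k : ℕ} (B : Matrix (Fin m) (Fin k) ℝ) (i : Fin k) : ℝ :=
  ∑ j, (B j i) ^ 2

def colNorm {m k : ℕ} (B : Matrix (Fin m) (Fin k) ℝ) (i : Fin k) : ℝ :=
  Real.sqrt (colNormSq B i)

def Rt {m n k : ℕ} (f : ℝ → ℝ) (B : Matrix (Fin m) (Fin k) ℝ)
    (C : Matrix (Fin n) (Fin k) ℝ) : ℝ :=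
  ∑ i, f ((colNormSq B i + colNormSq C i) / 2)

/-- Frobenius inner product `⟨X,Y⟩ = tr(XᵀY)`. -/
def frobInner {m n : ℕ} (X Y : Matrix (Fin m) (Fin n) ℝ) : ℝ :=
  (Xᵀ * Y).trace

def frobSq {m n : ℕ} (X : Matrix (Fin m) (Fin n) ℝ) : ℝ :=
  (Xᵀ * X).trace

def fmu (μ x : ℝ) : ℝ := μ - max (Real.sqrt μ - x) 0 ^ 2


lemma tele_sum (h : ℕ → ℝ) (K R : ℕ) (hRK : R ≤ K) :
    ∑ r ∈ Finset.range K, (if r + 1 ≤ R then h (r+1) - h r else 0) = h R - h 0 := by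
  rw [← Finset.sum_filter]
  have : (Finset.range K).filter (fun r => r + 1 ≤ R) = Finset.range R := by
    ext r; simp only [Finset.mem_filter, Finset.mem_range]; omega
  rw [this, Finset.sum_range_sub]

lemma abel_pos (s g : ℕ → ℝ) (hs : ∀ i, s (i+1) ≤ s i) (hs0 : ∀ i, 0 ≤ s i)
    (hG : ∀ K, 0 ≤ ∑ r ∈ Finset.range K, g r) :
    ∀ K, s K * (∑ r ∈ Finset.range K, g r) ≤ ∑ r ∈ Finset.range K, s r * g r := by
  intro K
  induction K with
  | zero => simp
  | succ K ih =>
    rw [Finset.sum_range_succ, Finset.sum_range_succ]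
    have h1 : s (K+1) * (∑ r ∈ Finset.range K, g r + g K)
        ≤ s K * (∑ r ∈ Finset.range K, g r + g K) := by
      have := hG (K+1); rw [Finset.sum_range_succ] at this
      exact mul_le_mul_of_nonneg_right (hs K) this
    nlinarith [ih]

/-- The key scalar majorization lemma: if all "cap sums" are dominated, then
sums of a concave nondecreasing `f` with `f 0 = 0` are dominated. -/
lemma caps_imply_f_sum {n k : ℕ} (f : ℝ → ℝ)
    (hconc : ConcaveOn ℝ (Set.Ici 0) f) (hmono : MonotoneOn f (Set.Ici 0)) (hf0 : f 0 = 0)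
    (x : Fin n → ℝ) (y : Fin k → ℝ) (hx : ∀ i, 0 ≤ x i) (hy : ∀ j, 0 ≤ y j)
    (hcap : ∀ t, 0 ≤ t → ∑ i, min (x i) t ≤ ∑ j, min (y j) t) :
    ∑ i, f (x i) ≤ ∑ j, f (y j) := by
  classical
  set T : Finset ℝ := insert 0 (Finset.image x Finset.univ ∪ Finset.image y Finset.univ) with hT
  have hTnonneg : ∀ c ∈ T, 0 ≤ c := by
    intro c hc
    simp only [hT, Finset.mem_insert, Finset.mem_union, Finset.mem_image] at hc
    rcases hc with rfl | ⟨i, _, rfl⟩ | ⟨j, _, rfl⟩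
    · exact le_refl 0
    · exact hx i
    · exact hy j
  have h0T : (0:ℝ) ∈ T := Finset.mem_insert_self 0 _
  have hxT : ∀ i, x i ∈ T := fun i => by
    simp only [hT, Finset.mem_insert, Finset.mem_union, Finset.mem_image]
    exact Or.inr (Or.inl ⟨i, Finset.mem_univ i, rfl⟩)
  have hyT : ∀ j, y j ∈ T := fun j => by
    simp only [hT, Finset.mem_insert, Finset.mem_union, Finset.mem_image]
    exact Or.inr (Or.inr ⟨j, Finset.mem_univ j, rfl⟩)
  set M : ℕ := T.card with hM
  have hM1 : 1 ≤ M := Finset.card_pos.mpr ⟨0, h0T⟩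
  set e : Fin M ≃o (T : Set ℝ) := T.orderIsoOfFin rfl with he
  set q : ℕ → ℝ := fun i => if h : i < M then (e ⟨i, h⟩ : ℝ) else 0 with hq
  -- basic facts about q
  have hqmem : ∀ i (h : i < M), q i ∈ T := by
    intro i h; simp only [hq, dif_pos h]; exact (e ⟨i, h⟩).2
  have hqle : ∀ i j (hi : i < M) (hj : j < M), (i ≤ j ↔ q i ≤ q j) := by
    intro i j hi hj
    simp only [hq, dif_pos hi, dif_pos hj]
    rw [show ((e ⟨i, hi⟩ : (T:Set ℝ)) : ℝ) ≤ ((e ⟨j, hj⟩ : (T:Set ℝ)) : ℝ) ↔ e ⟨i,hi⟩ ≤ e ⟨j,hj⟩ from Subtype.coe_le_coe, e.le_iff_le]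
    exact ⟨fun h => h, fun h => h⟩
  have hq0 : q 0 = 0 := by
    have h0 : (0:ℕ) < M := hM1
    have hle : q 0 ≤ 0 := by
      obtain ⟨i, hi⟩ := e.surjective ⟨0, h0T⟩
      have h2 : q 0 ≤ q i := (hqle 0 i h0 i.2).mp (Nat.zero_le _)
      have h3 : q (i:ℕ) = 0 := by
        simp only [hq, dif_pos i.2]
        rw [show (⟨(i:ℕ), i.2⟩ : Fin M) = i from Fin.eta i i.2, hi]
      rwa [h3] at h2
    exact le_antisymm hle (hTnonneg _ (hqmem 0 h0))
  have hqnonneg : ∀ i, 0 ≤ q i := by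
    intro i
    by_cases h : i < M
    · exact hTnonneg _ (hqmem i h)
    · simp [hq, dif_neg h]
  -- index of an element of T
  have hidx : ∀ c ∈ T, ∃ R, R < M ∧ q R = c := by
    intro c hc
    obtain ⟨i, hi⟩ := e.surjective ⟨c, hc⟩
    refine ⟨i, i.2, ?_⟩
    simp only [hq, dif_pos i.2]
    rw [show (⟨(i:ℕ), i.2⟩ : Fin M) = i from Fin.eta i i.2, hi]
  have hqlt : ∀ i j (hi : i < M) (hj : j < M), i < j → q i < q j := by
    intro i j hi hj hij
    rcases lt_or_ge (q i) (q j) with h | h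
    · exact h
    · exact absurd ((hqle j i hj hi).mpr h) (by omega)
  -- index-iff for conditions
  have hcond : ∀ (c : ℝ) (hc : c ∈ T) (R : ℕ) (hRM : R < M) (hqR : q R = c)
      (r : ℕ), r + 1 < M → ((q (r+1) ≤ c) = (r + 1 ≤ R)) := by
    intro c hc R hRM hqR r hr
    rw [← hqR]
    exact propext (hqle (r+1) R hr hRM).symm
  -- pointwise representation of f c
  have hpoint : ∀ c ∈ T, f c =
      ∑ r ∈ Finset.range (M-1), (if q (r+1) ≤ c then (f (q (r+1)) - f (q r)) else 0) := by
    intro c hc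
    obtain ⟨R, hRM, hqR⟩ := hidx c hc
    have hRle : R ≤ M - 1 := by omega
    have h3 : (∑ r ∈ Finset.range (M-1), (if q (r+1) ≤ c then (f (q (r+1)) - f (q r)) else 0))
        = ∑ r ∈ Finset.range (M-1), (if r + 1 ≤ R then (f (q (r+1)) - f (q r)) else 0) := by
      refine Finset.sum_congr rfl (fun r hr => ?_)
      rw [Finset.mem_range] at hr
      exact if_congr (iff_of_eq (hcond c hc R hRM hqR r (by omega))) rfl rfl
    have h2 : (∑ r ∈ Finset.range (M-1), (if r + 1 ≤ R then (f (q (r+1)) - f (q r)) else 0))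
        = f (q R) - f (q 0) := tele_sum (fun r => f (q r)) (M-1) R hRle
    rw [h3, h2, hqR, hq0, hf0, sub_zero]
  -- pointwise representation of min c (q K)
  have hminpt : ∀ c ∈ T, ∀ K, K ≤ M - 1 → min c (q K) =
      ∑ r ∈ Finset.range K, (if q (r+1) ≤ c then (q (r+1) - q r) else 0) := by
    intro c hc K hK
    have hKM : K < M := by omega
    have hminT : min c (q K) ∈ T := by
      rcases min_cases c (q K) with ⟨h, _⟩ | ⟨h, _⟩
      · rw [h]; exact hc
      · rw [h]; exact hqmem K hKM
    obtain ⟨R, hRM, hqR⟩ := hidx _ hminT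
    have hRK : R ≤ K := by
      have : q R ≤ q K := by rw [hqR]; exact min_le_right _ _
      exact (hqle R K hRM hKM).mpr this
    have h3 : (∑ r ∈ Finset.range K, (if q (r+1) ≤ c then (q (r+1) - q r) else 0))
        = ∑ r ∈ Finset.range K, (if r + 1 ≤ R then (q (r+1) - q r) else 0) := by
      refine Finset.sum_congr rfl (fun r hr => ?_)
      rw [Finset.mem_range] at hr
      have hr1 : r + 1 < M := by omega
      have : (q (r+1) ≤ c) = (r + 1 ≤ R) := by
        apply propext; constructor
        · intro h
          have h2 : q (r+1) ≤ q K := (hqle (r+1) K hr1 hKM).mp (by omega)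
          have : q (r+1) ≤ q R := by rw [hqR]; exact le_min h h2
          exact (hqle (r+1) R hr1 hRM).mpr this
        · intro h
          have : q (r+1) ≤ q R := (hqle (r+1) R hr1 hRM).mp h
          rw [hqR] at this
          exact le_trans this (min_le_left _ _)
      exact if_congr (iff_of_eq this) rfl rfl
    rw [h3, tele_sum q K R hRK, hqR, hq0, sub_zero]
  -- counting functions
  set Sx : ℕ → ℝ := fun r => ∑ i, (if q (r+1) ≤ x i then (1:ℝ) else 0) with hSx
  set Sy : ℕ → ℝ := fun r => ∑ j, (if q (r+1) ≤ y j then (1:ℝ) else 0) with hSy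
  -- sum representations
  have hfx : ∑ i, f (x i) = ∑ r ∈ Finset.range (M-1), (f (q (r+1)) - f (q r)) * Sx r := by
    rw [Finset.sum_congr rfl (fun i _ => hpoint (x i) (hxT i)), Finset.sum_comm]
    exact Finset.sum_congr rfl (fun r _ => by
      simp only [hSx, Finset.mul_sum, mul_ite, mul_one, mul_zero])
  have hfy : ∑ j, f (y j) = ∑ r ∈ Finset.range (M-1), (f (q (r+1)) - f (q r)) * Sy r := by
    rw [Finset.sum_congr rfl (fun j _ => hpoint (y j) (hyT j)), Finset.sum_comm]
    exact Finset.sum_congr rfl (fun r _ => by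
      simp only [hSy, Finset.mul_sum, mul_ite, mul_one, mul_zero])
  have hminx : ∀ K, K ≤ M - 1 →
      ∑ i, min (x i) (q K) = ∑ r ∈ Finset.range K, (q (r+1) - q r) * Sx r := by
    intro K hK
    rw [Finset.sum_congr rfl (fun i _ => hminpt (x i) (hxT i) K hK), Finset.sum_comm]
    exact Finset.sum_congr rfl (fun r _ => by
      simp only [hSx, Finset.mul_sum, mul_ite, mul_one, mul_zero])
  have hminy : ∀ K, K ≤ M - 1 →
      ∑ j, min (y j) (q K) = ∑ r ∈ Finset.range K, (q (r+1) - q r) * Sy r := by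
    intro K hK
    rw [Finset.sum_congr rfl (fun j _ => hminpt (y j) (hyT j) K hK), Finset.sum_comm]
    exact Finset.sum_congr rfl (fun r _ => by
      simp only [hSy, Finset.mul_sum, mul_ite, mul_one, mul_zero])
  -- the partial-sum nonnegativity
  set g : ℕ → ℝ := fun r => if r + 1 ≤ M - 1 then (q (r+1) - q r) * (Sy r - Sx r) else 0
    with hg
  have hG : ∀ K, 0 ≤ ∑ r ∈ Finset.range K, g r := by
    have key : ∀ K, K ≤ M - 1 → 0 ≤ ∑ r ∈ Finset.range K, g r := by
      intro K hK
      have h1 : ∑ r ∈ Finset.range K, g r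
          = ∑ r ∈ Finset.range K, (q (r+1) - q r) * (Sy r - Sx r) := by
        refine Finset.sum_congr rfl (fun r hr => ?_)
        rw [Finset.mem_range] at hr
        simp only [hg, if_pos (show r + 1 ≤ M - 1 by omega)]
      rw [h1]
      have h2 := hcap (q K) (hqnonneg K)
      rw [hminx K hK, hminy K hK] at h2
      have : ∑ r ∈ Finset.range K, (q (r+1) - q r) * (Sy r - Sx r)
          = ∑ r ∈ Finset.range K, (q (r+1) - q r) * Sy r
            - ∑ r ∈ Finset.range K, (q (r+1) - q r) * Sx r := by
        rw [← Finset.sum_sub_distrib]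
        exact Finset.sum_congr rfl (fun r _ => by ring)
      rw [this]
      linarith
    intro K
    rcases le_or_gt K (M-1) with h | h
    · exact key K h
    · have : ∑ r ∈ Finset.range K, g r = ∑ r ∈ Finset.range (M-1), g r := by
        refine (Finset.sum_subset (Finset.range_subset_range.mpr (by omega)) ?_).symm
        intro r _ hr
        rw [Finset.mem_range, not_lt] at hr
        simp only [hg, if_neg (show ¬ (r + 1 ≤ M - 1) by omega)]
      rw [this]
      exact key (M-1) le_rfl
  -- the slopes
  set s : ℕ → ℝ := fun r => if r + 1 ≤ M - 1 then
      (f (q (r+1)) - f (q r)) / (q (r+1) - q r) else 0 with hs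
  have hs0 : ∀ r, 0 ≤ s r := by
    intro r
    simp only [hs]
    split
    · rename_i h
      have hlt : q r < q (r+1) := hqlt r (r+1) (by omega) (by omega) (by omega)
      apply div_nonneg _ (by linarith)
      have := hmono (Set.mem_Ici.mpr (hqnonneg r)) (Set.mem_Ici.mpr (hqnonneg (r+1)))
        (le_of_lt hlt)
      linarith
    · exact le_refl 0
  have hsdec : ∀ r, s (r+1) ≤ s r := by
    intro r
    by_cases h2 : r + 2 ≤ M - 1
    · have hr1 : r + 1 < M := by omega
      have hr2 : r + 2 < M := by omega
      have hlt1 : q r < q (r+1) := hqlt r (r+1) (by omega) hr1 (by omega)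
      have hlt2 : q (r+1) < q (r+2) := hqlt (r+1) (r+2) hr1 hr2 (by omega)
      simp only [hs, if_pos (show r + 1 + 1 ≤ M - 1 from h2),
        if_pos (show r + 1 ≤ M - 1 by omega)]
      have := hconc.slope_anti_adjacent (Set.mem_Ici.mpr (hqnonneg r))
        (Set.mem_Ici.mpr (hqnonneg (r+2))) hlt1 hlt2
      convert this using 3 <;> norm_num <;> ring_nf
    · have : s (r+1) = 0 := by simp only [hs, if_neg (show ¬ (r+1+1 ≤ M-1) from h2)]
      rw [this]
      exact hs0 r
  -- combine
  have hfinal : ∑ j, f (y j) - ∑ i, f (x i) = ∑ r ∈ Finset.range (M-1), s r * g r := by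
    rw [hfx, hfy, ← Finset.sum_sub_distrib]
    refine Finset.sum_congr rfl (fun r hr => ?_)
    rw [Finset.mem_range] at hr
    have h1 : r + 1 ≤ M - 1 := by omega
    have hne : q (r+1) - q r ≠ 0 := by
      have := hqlt r (r+1) (by omega) (by omega) (by omega)
      intro hcon; linarith [this, sub_eq_zero.mp hcon]
    simp only [hs, hg, if_pos h1]
    field_simp
  have habel := abel_pos s g hsdec hs0 hG (M-1)
  have hfin2 : 0 ≤ s (M-1) * ∑ r ∈ Finset.range (M-1), g r :=
    mul_nonneg (hs0 _) (hG _)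
  linarith [hfinal, habel, hfin2]

lemma inner_eq_dot {n : ℕ} (a b : EuclideanSpace ℝ (Fin n)) : (inner ℝ a b : ℝ) = ⇑a ⬝ᵥ ⇑b := by
  simp [PiLp.inner_apply, RCLike.inner_apply, dotProduct, mul_comm]

lemma mulVec_dot {n m : ℕ} (X : Matrix (Fin m) (Fin n) ℝ) (a b : Fin n → ℝ) :
    (X *ᵥ a) ⬝ᵥ (X *ᵥ b) = a ⬝ᵥ ((Xᵀ * X) *ᵥ b) := by
  rw [← Matrix.mulVec_mulVec, Matrix.dotProduct_mulVec a, Matrix.vecMul_transpose]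

/-- Full SVD package for a real rectangular matrix. -/
lemma svd_exists {m n : ℕ} (X : Matrix (Fin m) (Fin n) ℝ) :
    ∃ (σ : Fin n → ℝ) (u : Fin n → Fin m → ℝ) (v : Fin n → Fin n → ℝ),
      (∀ i : Fin (min m n), sVal X i = σ (Fin.castLE (Nat.min_le_right m n) i)) ∧
      (∀ i, 0 ≤ σ i) ∧
      (∀ i j : Fin n, i ≤ j → σ j ≤ σ i) ∧
      (∀ i j, v i ⬝ᵥ v j = if i = j then 1 else 0) ∧
      (∀ i j, u i ⬝ᵥ u j = if i = j ∧ σ i ≠ 0 then 1 else 0) ∧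
      (∀ i, X *ᵥ v i = σ i • u i) ∧
      (∀ w : Fin n → ℝ, ∑ i, (v i ⬝ᵥ w) • v i = w) ∧
      (∀ i : Fin n, σ i ≠ 0 → (i : ℕ) < X.rank) := by
  classical
  set hA := Matrix.isHermitian_transpose_mul_self X with hhA
  set prm : Equiv.Perm (Fin n) := Tuple.sort (fun j => -hA.eigenvalues j) with hprm
  set lam : Fin n → ℝ := fun i => hA.eigenvalues (prm i) with hlam
  set σ : Fin n → ℝ := fun i => Real.sqrt (lam i) with hσ
  set v : Fin n → Fin n → ℝ := fun i => ⇑(hA.eigenvectorBasis (prm i)) with hv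
  set u : Fin n → Fin m → ℝ := fun i =>
    if σ i = 0 then 0 else (σ i)⁻¹ • (X *ᵥ v i) with hu
  have hpsd : (Xᵀ * X).PosSemidef := by
    have := Matrix.posSemidef_conjTranspose_mul_self X
    simpa using this
  have hlam0 : ∀ i, 0 ≤ lam i := fun i => hpsd.eigenvalues_nonneg (prm i)
  have hσ0 : ∀ i, 0 ≤ σ i := fun i => Real.sqrt_nonneg _
  have hσsq : ∀ i, σ i ^ 2 = lam i := fun i => Real.sq_sqrt (hlam0 i)
  have hlamanti : ∀ i j : Fin n, i ≤ j → lam j ≤ lam i := by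
    intro i j hij
    have := Tuple.monotone_sort (fun j => -hA.eigenvalues j) hij
    simpa [hlam, hprm] using this
  -- eigen equation
  have heig : ∀ i, (Xᵀ * X) *ᵥ v i = lam i • v i := fun i =>
    hA.mulVec_eigenvectorBasis (prm i)
  -- orthonormality of v
  have hvortho : ∀ i j, v i ⬝ᵥ v j = if i = j then 1 else 0 := by
    intro i j
    have h := (orthonormal_iff_ite.mp (hA.eigenvectorBasis.orthonormal)) (prm i) (prm j)
    rw [inner_eq_dot] at h
    simpa [hv, EmbeddingLike.apply_eq_iff_eq] using h
  -- key dot product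
  have hXv : ∀ i j, (X *ᵥ v i) ⬝ᵥ (X *ᵥ v j) = if i = j then lam j else 0 := by
    intro i j
    rw [mulVec_dot, heig j, dotProduct_smul, hvortho i j]
    by_cases h : i = j <;> simp [h, mul_comm]
  have hXv0 : ∀ i, σ i = 0 → X *ᵥ v i = 0 := by
    intro i h
    have h1 : (X *ᵥ v i) ⬝ᵥ (X *ᵥ v i) = 0 := by
      rw [hXv i i, if_pos rfl, ← hσsq i, h]; ring
    exact dotProduct_self_eq_zero.mp h1
  have hXvu : ∀ i, X *ᵥ v i = σ i • u i := by
    intro i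
    by_cases h : σ i = 0
    · rw [hu]; simp only [if_pos h, h, zero_smul]; exact hXv0 i h
    · rw [hu]; simp only [if_neg h, smul_smul, mul_inv_cancel₀ h, one_smul]
  have huortho : ∀ i j, u i ⬝ᵥ u j = if i = j ∧ σ i ≠ 0 then 1 else 0 := by
    intro i j
    by_cases hi : σ i = 0
    · simp [hu, hi]
    · by_cases hj : σ j = 0
      · simp only [hu, if_neg hi, if_pos hj]
        simp only [dotProduct_zero]
        have : ¬ (i = j ∧ σ i ≠ 0) := by
          rintro ⟨rfl, h⟩; exact h hj
        rw [if_neg this]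
      · simp only [hu, if_neg hi, if_neg hj, smul_dotProduct, dotProduct_smul,
          hXv i j]
        by_cases hij : i = j
        · subst hij
          rw [if_pos rfl, if_pos ⟨rfl, hi⟩]
          rw [← hσsq i]
          field_simp
          simp only [smul_eq_mul]
          field_simp
        · rw [if_neg hij, if_neg (by rintro ⟨rfl, _⟩; exact hij rfl)]
          simp
  -- basis expansion
  have hexp : ∀ w : Fin n → ℝ, ∑ i, (v i ⬝ᵥ w) • v i = w := by
    intro w
    have h := hA.eigenvectorBasis.sum_repr (WithLp.toLp 2 w)
    have h2 : ∑ i, (v i ⬝ᵥ w) • v i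
        = ∑ j, (hA.eigenvectorBasis.repr (WithLp.toLp 2 w) j) •
            ⇑(hA.eigenvectorBasis j) := by
      rw [← Equiv.sum_comp prm (fun j => (hA.eigenvectorBasis.repr _ j) • ⇑(hA.eigenvectorBasis j))]
      refine Finset.sum_congr rfl (fun i _ => ?_)
      rw [OrthonormalBasis.repr_apply_apply, inner_eq_dot]
    rw [h2]
    have h3 := congrArg (fun z : EuclideanSpace ℝ (Fin n) => (z : Fin n → ℝ)) h
    simpa using h3
  -- rank bound
  have hrank : ∀ i : Fin n, σ i ≠ 0 → (i : ℕ) < X.rank := by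
    intro i hi
    have hXr : X.rank = Fintype.card {j // hA.eigenvalues j ≠ 0} := by
      rw [← Matrix.rank_transpose_mul_self X]
      exact hA.rank_eq_card_non_zero_eigs
    have hinj : Function.Injective (fun p : Fin ((i:ℕ)+1) =>
        (⟨prm (Fin.castLE (by omega) p), by
          have hple : (Fin.castLE (show (i:ℕ)+1 ≤ n by omega) p) ≤ i := by
            simp [Fin.le_def]; omega
          have h1 : lam i ≤ lam (Fin.castLE (by omega) p) := hlamanti _ i hple
          have h2 : 0 < lam i := by
            rcases lt_or_eq_of_le (hlam0 i) with h | h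
            · exact h
            · exact absurd (show σ i = 0 by
                show Real.sqrt (lam i) = 0
                rw [← h, Real.sqrt_zero]) hi
          show hA.eigenvalues (prm _) ≠ 0
          have : (0:ℝ) < lam (Fin.castLE (by omega) p) := lt_of_lt_of_le h2 h1
          rw [hlam] at this
          exact ne_of_gt this⟩ : {j // hA.eigenvalues j ≠ 0})) := by
      intro p q hpq
      simp only [Subtype.mk_eq_mk] at hpq
      have := prm.injective hpq
      exact Fin.castLE_injective _ this
    have := Fintype.card_le_of_injective _ hinj
    rw [Fintype.card_fin] at this
    omega
  refine ⟨σ, u, v, ?_, hσ0, fun i j hij => Real.sqrt_le_sqrt (hlamanti i j hij),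
    hvortho, huortho, hXvu, hexp, hrank⟩
  intro i
  rfl


lemma vecMulVec_mulVec' {m n : ℕ} (a : Fin m → ℝ) (c : Fin n → ℝ) (w : Fin n → ℝ) :
    (vecMulVec a c) *ᵥ w = (c ⬝ᵥ w) • a := by
  funext p
  simp only [Matrix.mulVec, Matrix.vecMulVec_apply, dotProduct, Pi.smul_apply, smul_eq_mul]
  rw [Finset.sum_mul]
  exact Finset.sum_congr rfl (fun q _ => by ring)

lemma sum_fin_eq_sum_fin {a b r : ℕ} (g : ℕ → ℝ) (hg : ∀ i, r ≤ i → g i = 0)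
    (hra : r ≤ a) (hrb : r ≤ b) :
    ∑ i : Fin a, g i = ∑ i : Fin b, g i := by
  rw [Fin.sum_univ_eq_sum_range, Fin.sum_univ_eq_sum_range]
  rw [← Finset.sum_subset (Finset.range_subset_range.mpr hra)
    (fun x _ hx => hg x (by rw [Finset.mem_range, not_lt] at hx; exact hx))]
  rw [← Finset.sum_subset (Finset.range_subset_range.mpr hrb)
    (fun x _ hx => hg x (by rw [Finset.mem_range, not_lt] at hx; exact hx))]

lemma dot_sum_right {d N : ℕ} (b : Fin d → ℝ) (f : Fin N → Fin d → ℝ) :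
    b ⬝ᵥ (∑ i, f i) = ∑ i, b ⬝ᵥ (f i) := by
  simp only [dotProduct, Finset.sum_apply, Finset.mul_sum]
  exact Finset.sum_comm

lemma dot_sum_left {d N : ℕ} (b : Fin d → ℝ) (f : Fin N → Fin d → ℝ) :
    (∑ i, f i) ⬝ᵥ b = ∑ i, (f i) ⬝ᵥ b := by
  simp only [dotProduct, Finset.sum_apply, Finset.sum_mul]
  exact Finset.sum_comm

/-- Bessel-type inequality for a family orthonormal away from zero vectors. -/
lemma bessel_dot {N d : ℕ} (u : Fin N → Fin d → ℝ)
    (h : ∀ i j, u i ⬝ᵥ u j = if i = j ∧ u i ⬝ᵥ u i = 1 then 1 else 0)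
    (b : Fin d → ℝ) : ∑ i, (u i ⬝ᵥ b)^2 ≤ b ⬝ᵥ b := by
  classical
  set c : Fin N → ℝ := fun i => u i ⬝ᵥ b with hc
  set w : Fin d → ℝ := b - ∑ i, c i • u i with hw
  have h0 : 0 ≤ w ⬝ᵥ w := by
    simp only [dotProduct]
    exact Finset.sum_nonneg (fun p _ => mul_self_nonneg _)
  have hexp : w ⬝ᵥ w = b ⬝ᵥ b - 2 * ∑ i, c i ^ 2
      + ∑ i, c i ^ 2 * (if u i ⬝ᵥ u i = 1 then 1 else 0) := by
    rw [hw, sub_dotProduct, dotProduct_sub, dotProduct_sub]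
    rw [dot_sum_right, dot_sum_left, dot_sum_left]
    have e1 : ∑ i, (c i • u i) ⬝ᵥ b = ∑ i, c i ^ 2 := by
      refine Finset.sum_congr rfl (fun i _ => ?_)
      rw [smul_dotProduct]; simp only [smul_eq_mul, sq]; rfl
    have e2 : ∑ i, b ⬝ᵥ (c i • u i) = ∑ i, c i ^ 2 := by
      refine Finset.sum_congr rfl (fun i _ => ?_)
      rw [dotProduct_smul, dotProduct_comm]; simp only [smul_eq_mul, sq]; rfl
    have e3 : ∑ i, (c i • u i) ⬝ᵥ (∑ j, c j • u j) = ∑ i, c i ^ 2 * (if u i ⬝ᵥ u i = 1 then 1 else 0) := by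
      refine Finset.sum_congr rfl (fun i _ => ?_)
      rw [smul_dotProduct, dot_sum_right]
      rw [Finset.sum_eq_single i]
      · by_cases hii : u i ⬝ᵥ u i = 1
        · rw [if_pos hii, dotProduct_smul, h i i, if_pos ⟨rfl, hii⟩]
          simp [smul_eq_mul, sq]
        · rw [if_neg hii, dotProduct_smul, h i i,
            if_neg (by rintro ⟨_, hcon⟩; exact hii hcon)]
          simp
      · intro j _ hji
        rw [dotProduct_smul, h i j, if_neg (by rintro ⟨rfl, _⟩; exact hji rfl)]
        simp
      · intro hcon; exact absurd (Finset.mem_univ i) hcon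
    rw [e1, e2, e3]; ring
  have hterm : ∀ i, c i ^ 2 * (if u i ⬝ᵥ u i = 1 then 1 else 0) ≤ c i ^ 2 := by
    intro i
    by_cases hii : u i ⬝ᵥ u i = 1
    · rw [if_pos hii]; ring_nf; exact le_refl _
    · rw [if_neg hii]; rw [mul_zero]; exact sq_nonneg _
  have := Finset.sum_le_sum (fun i (_ : i ∈ Finset.univ) => hterm i)
  have hfin : 0 ≤ b ⬝ᵥ b - ∑ i, c i ^ 2 := by
    rw [hexp] at h0
    linarith
  linarith [hfin]


lemma mulVec_sum' {m n N : ℕ} (X : Matrix (Fin m) (Fin n) ℝ) (w : Fin N → Fin n → ℝ) :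
    X *ᵥ (∑ i, w i) = ∑ i, X *ᵥ (w i) := by
  funext p
  simp only [Matrix.mulVec, dotProduct, Finset.sum_apply, Finset.mul_sum]
  exact Finset.sum_comm

section Main

variable {m n k : ℕ} (f : ℝ → ℝ)

theorem membership_part (hf0 : f 0 = 0) (X : Matrix (Fin m) (Fin n) ℝ) (hk : X.rank ≤ k) :
    ∃ (B : Matrix (Fin m) (Fin k) ℝ) (C : Matrix (Fin n) (Fin k) ℝ),
      B * Cᵀ = X ∧ regR f X = ∑ i, f (colNorm B i * colNorm C i) := by
  classical
  obtain ⟨σ, u, v, hsval, hσ0, hσanti, hvortho, huortho, hXvu, hexp, hrank⟩ := svd_exists X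
  have hrmn : X.rank ≤ min m n := le_min (Matrix.rank_le_height X) (Matrix.rank_le_width X)
  have hσzero : ∀ i : Fin n, X.rank ≤ (i:ℕ) → σ i = 0 := by
    intro i hi
    by_contra hne
    have := hrank i hne
    omega
  set B : Matrix (Fin m) (Fin k) ℝ := fun p j =>
    if h : (j:ℕ) < n then Real.sqrt (σ ⟨j,h⟩) * u ⟨j,h⟩ p else 0 with hB
  set C : Matrix (Fin n) (Fin k) ℝ := fun q j =>
    if h : (j:ℕ) < n then Real.sqrt (σ ⟨j,h⟩) * v ⟨j,h⟩ q else 0 with hC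
  refine ⟨B, C, ?_, ?_⟩
  · -- B * Cᵀ = X
    ext p q
    rw [Matrix.mul_apply]
    have hX : X p q = ∑ i : Fin n, σ i * (u i p * v i q) := by
      have h1 : X *ᵥ (Pi.single q 1) = ∑ i, ((v i ⬝ᵥ Pi.single q 1) * σ i) • u i := by
        conv_lhs => rw [← hexp (Pi.single q 1)]
        rw [mulVec_sum']
        refine Finset.sum_congr rfl (fun i _ => ?_)
        rw [Matrix.mulVec_smul, hXvu i, smul_smul]
      have h2 := congrFun h1 p
      simp only [Matrix.mulVec_single_one, Matrix.col_apply, mul_one, Finset.sum_apply, Pi.smul_apply,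
        smul_eq_mul, dotProduct_single] at h2
      rw [h2]
      exact Finset.sum_congr rfl (fun i _ => by ring)
    set g : ℕ → ℝ := fun j => if h : j < n then σ ⟨j,h⟩ * (u ⟨j,h⟩ p * v ⟨j,h⟩ q) else 0
      with hg
    have hgz : ∀ i, X.rank ≤ i → g i = 0 := by
      intro i hi
      simp only [hg]
      split
      · rename_i h
        rw [hσzero ⟨i,h⟩ hi, zero_mul]
      · rfl
    have hL : ∑ j : Fin k, B p j * Cᵀ j q = ∑ j : Fin k, g (j:ℕ) := by
      refine Finset.sum_congr rfl (fun j _ => ?_)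
      rw [Matrix.transpose_apply, hB, hC, hg]
      by_cases h : (j:ℕ) < n
      · simp only [dif_pos h]
        have hs : Real.sqrt (σ ⟨j,h⟩) * Real.sqrt (σ ⟨j,h⟩) = σ ⟨j,h⟩ :=
          Real.mul_self_sqrt (hσ0 _)
        linear_combination (u ⟨(j:ℕ),h⟩ p * v ⟨(j:ℕ),h⟩ q) * hs
      · simp only [dif_neg h, zero_mul]
    have hR : ∑ i : Fin n, σ i * (u i p * v i q) = ∑ i : Fin n, g (i:ℕ) := by
      refine Finset.sum_congr rfl (fun i _ => ?_)
      rw [hg]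
      simp only [dif_pos i.isLt, Fin.eta]
    rw [hL, hX, hR]
    exact sum_fin_eq_sum_fin g hgz hk (le_trans hrmn (Nat.min_le_right m n))
  · -- the value equals regR f X
    have hcn : ∀ j : Fin k, colNorm B j * colNorm C j
        = (if h : (j:ℕ) < n then σ ⟨j,h⟩ else 0) := by
      intro j
      have hBsq : colNormSq B j = (if h : (j:ℕ) < n then σ ⟨j,h⟩ * (u ⟨j,h⟩ ⬝ᵥ u ⟨j,h⟩) else 0) := by
        rw [colNormSq, hB]
        by_cases h : (j:ℕ) < n
        · simp only [dif_pos h, dotProduct, Finset.mul_sum]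
          refine Finset.sum_congr rfl (fun p _ => ?_)
          have hs : Real.sqrt (σ ⟨j,h⟩) * Real.sqrt (σ ⟨j,h⟩) = σ ⟨j,h⟩ :=
            Real.mul_self_sqrt (hσ0 _)
          ring_nf
          linear_combination (u ⟨(j:ℕ),h⟩ p)^2 * hs
        · simp only [dif_neg h]
          simp
      have hCsq : colNormSq C j = (if h : (j:ℕ) < n then σ ⟨j,h⟩ else 0) := by
        rw [colNormSq, hC]
        by_cases h : (j:ℕ) < n
        · simp only [dif_pos h]
          have hvv := hvortho ⟨j,h⟩ ⟨j,h⟩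
          rw [if_pos rfl] at hvv
          have hs : Real.sqrt (σ ⟨j,h⟩) * Real.sqrt (σ ⟨j,h⟩) = σ ⟨j,h⟩ :=
            Real.mul_self_sqrt (hσ0 _)
          have : ∑ p, (Real.sqrt (σ ⟨j,h⟩) * v ⟨j,h⟩ p)^2
              = (σ ⟨j,h⟩) * (v ⟨j,h⟩ ⬝ᵥ v ⟨j,h⟩) := by
            rw [dotProduct, Finset.mul_sum]
            refine Finset.sum_congr rfl (fun p _ => ?_)
            ring_nf
            linear_combination (v ⟨(j:ℕ),h⟩ p)^2 * hs
          rw [this, hvv, mul_one]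
        · simp only [dif_neg h]
          simp
      rw [colNorm, colNorm, hBsq, hCsq]
      by_cases h : (j:ℕ) < n
      · simp only [dif_pos h]
        by_cases hz : σ ⟨j,h⟩ = 0
        · rw [hz]
          simp
        · have huu := huortho ⟨j,h⟩ ⟨j,h⟩
          rw [if_pos ⟨rfl, hz⟩] at huu
          rw [huu, mul_one]
          exact Real.mul_self_sqrt (hσ0 _)
      · simp only [dif_neg h]
        simp
    set gf : ℕ → ℝ := fun i => if h : i < n then f (σ ⟨i,h⟩) else 0 with hgf
    have hgfz : ∀ i, X.rank ≤ i → gf i = 0 := by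
      intro i hi
      simp only [hgf]
      split
      · rename_i h
        rw [hσzero ⟨i,h⟩ hi, hf0]
      · rfl
    have hL : ∑ j : Fin k, f (colNorm B j * colNorm C j) = ∑ j : Fin k, gf (j:ℕ) := by
      refine Finset.sum_congr rfl (fun j _ => ?_)
      rw [hcn j, hgf]
      by_cases h : (j:ℕ) < n
      · simp only [dif_pos h]
      · simp only [dif_neg h, hf0]
    have hR : regR f X = ∑ i : Fin (min m n), gf (i:ℕ) := by
      rw [regR]
      refine Finset.sum_congr rfl (fun i _ => ?_)
      have h : (i:ℕ) < n := lt_of_lt_of_le i.isLt (Nat.min_le_right m n)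
      rw [hgf]
      simp only [dif_pos h]
      rw [hsval i]
      congr 1
    rw [hL, hR]
    exact sum_fin_eq_sum_fin gf hgfz hrmn hk

end Main

lemma dot_finsum_right {d : ℕ} {ι : Type*} (s : Finset ι) (b : Fin d → ℝ) (f : ι → Fin d → ℝ) :
    b ⬝ᵥ (∑ i ∈ s, f i) = ∑ i ∈ s, b ⬝ᵥ (f i) := by
  simp only [dotProduct, Finset.sum_apply, Finset.mul_sum]
  exact Finset.sum_comm

lemma dot_finsum_left {d : ℕ} {ι : Type*} (s : Finset ι) (b : Fin d → ℝ) (f : ι → Fin d → ℝ) :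
    (∑ i ∈ s, f i) ⬝ᵥ b = ∑ i ∈ s, (f i) ⬝ᵥ b := by
  simp only [dotProduct, Finset.sum_apply, Finset.sum_mul]
  exact Finset.sum_comm

lemma finsum_mulVec {m n : ℕ} {ι : Type*} (s : Finset ι) (M : ι → Matrix (Fin m) (Fin n) ℝ)
    (w : Fin n → ℝ) : (∑ j ∈ s, M j) *ᵥ w = ∑ j ∈ s, (M j *ᵥ w) := by
  funext p
  simp only [Matrix.mulVec, dotProduct, Finset.sum_apply, Matrix.sum_apply, Finset.sum_mul]
  exact Finset.sum_comm

/-- dot product of two expansions in an "orthogonal away from zero" family -/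
lemma dot_sum_pair {N d : ℕ} (g : Fin N → Fin d → ℝ) (a b : Fin N → ℝ)
    (h : ∀ i j, i ≠ j → g i ⬝ᵥ g j = 0) :
    (∑ i, a i • g i) ⬝ᵥ (∑ j, b j • g j) = ∑ i, (a i * b i) * (g i ⬝ᵥ g i) := by
  rw [dot_finsum_left]
  refine Finset.sum_congr rfl (fun i _ => ?_)
  rw [smul_dotProduct, dot_finsum_right]
  rw [Finset.sum_eq_single i]
  · rw [dotProduct_smul]
    simp only [smul_eq_mul]; ring
  · intro j _ hji
    rw [dotProduct_smul, h i j (Ne.symm hji)]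
    simp
  · intro hcon; exact absurd (Finset.mem_univ i) hcon

section LB

variable {m n k : ℕ}

theorem lower_bound_part (f : ℝ → ℝ)
    (hconc : ConcaveOn ℝ (Set.Ici 0) f) (hmono : MonotoneOn f (Set.Ici 0))
    (hf0 : f 0 = 0) (X : Matrix (Fin m) (Fin n) ℝ)
    (B : Matrix (Fin m) (Fin k) ℝ) (C : Matrix (Fin n) (Fin k) ℝ) (hBC : B * Cᵀ = X) :
    regR f X ≤ ∑ j, f (colNorm B j * colNorm C j) := by
  classical
  obtain ⟨σ, u, v, hsval, hσ0, hσanti, hvortho, huortho, hXvu, hexp, hrank⟩ := svd_exists X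
  have hrmn : X.rank ≤ min m n := le_min (Matrix.rank_le_height X) (Matrix.rank_le_width X)
  have hσzero : ∀ i : Fin n, X.rank ≤ (i:ℕ) → σ i = 0 := by
    intro i hi
    by_contra hne
    have := hrank i hne
    omega
  -- rewrite regR as a sum over Fin n
  have hreg : regR f X = ∑ i : Fin n, f (σ i) := by
    set gf : ℕ → ℝ := fun i => if h : i < n then f (σ ⟨i,h⟩) else 0 with hgf
    have hgfz : ∀ i, X.rank ≤ i → gf i = 0 := by
      intro i hi
      simp only [hgf]
      split
      · rename_i h
        rw [hσzero ⟨i,h⟩ hi, hf0]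
      · rfl
    have h1 : regR f X = ∑ i : Fin (min m n), gf (i:ℕ) := by
      rw [regR]
      refine Finset.sum_congr rfl (fun i _ => ?_)
      have h : (i:ℕ) < n := lt_of_lt_of_le i.isLt (Nat.min_le_right m n)
      simp only [hgf, dif_pos h]
      rw [hsval i]
      congr 1
    have h2 : ∑ i : Fin n, f (σ i) = ∑ i : Fin n, gf (i:ℕ) := by
      refine Finset.sum_congr rfl (fun i _ => ?_)
      simp only [hgf, dif_pos i.isLt, Fin.eta]
    rw [h1, h2]
    exact sum_fin_eq_sum_fin gf hgfz hrmn (le_trans hrmn (Nat.min_le_right m n))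
  rw [hreg]
  set r : Fin k → ℝ := fun j => colNorm B j * colNorm C j with hr
  have hr0 : ∀ j, 0 ≤ r j := fun j => mul_nonneg (Real.sqrt_nonneg _) (Real.sqrt_nonneg _)
  refine caps_imply_f_sum f hconc hmono hf0 σ r hσ0 hr0 ?_
  intro t ht
  -- the cap inequality
  set J : Finset (Fin k) := Finset.univ.filter (fun j => t < r j) with hJ
  set J2 : Finset (Fin k) := Finset.univ.filter (fun j => ¬ t < r j) with hJ2
  set l : ℕ := J.card with hl
  set Bc : Fin k → Fin m → ℝ := fun j p => B p j with hBc
  set Cc : Fin k → Fin n → ℝ := fun j q => C q j with hCc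
  set Y : Matrix (Fin m) (Fin n) ℝ := ∑ j ∈ J, vecMulVec (Bc j) (Cc j) with hY
  set Z : Matrix (Fin m) (Fin n) ℝ := ∑ j ∈ J2, vecMulVec (Bc j) (Cc j) with hZ
  have hXYZ : X = Y + Z := by
    rw [← hBC]
    ext p q
    rw [Matrix.mul_apply, Matrix.add_apply, hY, hZ, Matrix.sum_apply, Matrix.sum_apply]
    simp only [Matrix.vecMulVec_apply, Matrix.transpose_apply]
    rw [hJ, hJ2]
    exact (Finset.sum_filter_add_sum_filter_not Finset.univ _ _).symm
  -- column norms as dot products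
  have hBdot : ∀ j, Bc j ⬝ᵥ Bc j = colNormSq B j := by
    intro j
    rw [colNormSq, dotProduct]
    refine Finset.sum_congr rfl (fun p _ => ?_)
    rw [pow_two]
  have hCdot : ∀ j, Cc j ⬝ᵥ Cc j = colNormSq C j := by
    intro j
    rw [colNormSq, dotProduct]
    refine Finset.sum_congr rfl (fun p _ => ?_)
    rw [pow_two]
  -- SVD of Z
  obtain ⟨τ, uZ, vZ, _, hτ0, hτanti, hvZortho, huZortho, hZvu, hexpZ, _⟩ := svd_exists Z
  -- quasi-orthonormality hypotheses in the bessel_dot format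
  have huZ' : ∀ i j, uZ i ⬝ᵥ uZ j = if i = j ∧ uZ i ⬝ᵥ uZ i = 1 then 1 else 0 := by
    intro i j
    rw [huZortho i j]
    by_cases hij : i = j
    · subst hij
      by_cases hz : τ i ≠ 0
      · rw [if_pos ⟨rfl, hz⟩]
        rw [if_pos ⟨rfl, by rw [huZortho i i, if_pos ⟨rfl, hz⟩]⟩]
      · rw [if_neg (by rintro ⟨_, hcon⟩; exact hz hcon)]
        rw [if_neg (by
          rintro ⟨_, hcon⟩
          rw [huZortho i i, if_neg (by rintro ⟨_, h2⟩; exact hz h2)] at hcon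
          norm_num at hcon)]
    · rw [if_neg (by rintro ⟨hcon, _⟩; exact hij hcon),
        if_neg (by rintro ⟨hcon, _⟩; exact hij hcon)]
  have hvZ' : ∀ i j, vZ i ⬝ᵥ vZ j = if i = j ∧ vZ i ⬝ᵥ vZ i = 1 then 1 else 0 := by
    intro i j
    rw [hvZortho i j]
    by_cases hij : i = j
    · subst hij
      rw [if_pos rfl, if_pos ⟨rfl, by rw [hvZortho i i, if_pos rfl]⟩]
    · rw [if_neg hij, if_neg (by rintro ⟨hcon, _⟩; exact hij hcon)]
  -- Step A : ∑ τ ≤ ∑_{j ∈ J2} r j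
  have hstepA : ∑ i : Fin n, τ i ≤ ∑ j ∈ J2, r j := by
    have hτval : ∀ i, τ i = uZ i ⬝ᵥ (Z *ᵥ vZ i) := by
      intro i
      rw [hZvu i, dotProduct_smul, huZortho i i]
      by_cases h : τ i = 0
      · rw [h]; simp
      · rw [if_pos ⟨rfl, h⟩]; simp
    have hZv : ∀ i, uZ i ⬝ᵥ (Z *ᵥ vZ i) = ∑ j ∈ J2, (Cc j ⬝ᵥ vZ i) * (uZ i ⬝ᵥ Bc j) := by
      intro i
      rw [hZ, finsum_mulVec, dot_finsum_right]
      refine Finset.sum_congr rfl (fun j _ => ?_)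
      rw [vecMulVec_mulVec', dotProduct_smul]
      simp [smul_eq_mul]
    have hswap : ∑ i : Fin n, τ i = ∑ j ∈ J2, ∑ i : Fin n, (Cc j ⬝ᵥ vZ i) * (uZ i ⬝ᵥ Bc j) := by
      rw [Finset.sum_congr rfl (fun i _ => (hτval i).trans (hZv i))]
      exact Finset.sum_comm
    rw [hswap]
    refine Finset.sum_le_sum (fun j _ => ?_)
    -- Cauchy-Schwarz + Bessel
    have hCS : (∑ i : Fin n, (Cc j ⬝ᵥ vZ i) * (uZ i ⬝ᵥ Bc j))
        ≤ Real.sqrt (∑ i : Fin n, (Cc j ⬝ᵥ vZ i)^2) * Real.sqrt (∑ i : Fin n, (uZ i ⬝ᵥ Bc j)^2) := by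
      have h1 := Finset.sum_mul_sq_le_sq_mul_sq Finset.univ
        (fun i : Fin n => Cc j ⬝ᵥ vZ i) (fun i => uZ i ⬝ᵥ Bc j)
      calc ∑ i : Fin n, (Cc j ⬝ᵥ vZ i) * (uZ i ⬝ᵥ Bc j)
          ≤ |∑ i : Fin n, (Cc j ⬝ᵥ vZ i) * (uZ i ⬝ᵥ Bc j)| := le_abs_self _
        _ = Real.sqrt ((∑ i : Fin n, (Cc j ⬝ᵥ vZ i) * (uZ i ⬝ᵥ Bc j))^2) :=
            (Real.sqrt_sq_eq_abs _).symm
        _ ≤ Real.sqrt ((∑ i : Fin n, (Cc j ⬝ᵥ vZ i)^2) * (∑ i : Fin n, (uZ i ⬝ᵥ Bc j)^2)) :=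
            Real.sqrt_le_sqrt h1
        _ = _ := Real.sqrt_mul (Finset.sum_nonneg (fun i _ => sq_nonneg _)) _
    have hb1 : ∑ i : Fin n, (Cc j ⬝ᵥ vZ i)^2 ≤ colNormSq C j := by
      have := bessel_dot vZ hvZ' (Cc j)
      rw [hCdot j] at this
      calc ∑ i : Fin n, (Cc j ⬝ᵥ vZ i)^2 = ∑ i : Fin n, (vZ i ⬝ᵥ Cc j)^2 :=
            Finset.sum_congr rfl (fun i _ => by rw [dotProduct_comm])
        _ ≤ _ := this
    have hb2 : ∑ i : Fin n, (uZ i ⬝ᵥ Bc j)^2 ≤ colNormSq B j := by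
      have := bessel_dot uZ huZ' (Bc j)
      rw [hBdot j] at this
      exact this
    calc ∑ i : Fin n, (Cc j ⬝ᵥ vZ i) * (uZ i ⬝ᵥ Bc j) ≤ _ := hCS
      _ ≤ Real.sqrt (colNormSq C j) * Real.sqrt (colNormSq B j) := by
          apply mul_le_mul (Real.sqrt_le_sqrt hb1) (Real.sqrt_le_sqrt hb2)
            (Real.sqrt_nonneg _) (Real.sqrt_nonneg _)
      _ = r j := by simp only [hr, colNorm]; ring
  -- Step B : interlacing
  have hstepB : ∀ (i : ℕ) (hln : l + i < n), σ ⟨l+i, hln⟩ ≤ τ ⟨i, by omega⟩ := by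
    intro i hln
    have hdn : l + i + 1 ≤ n := hln
    set d : ℕ := l + i + 1 with hd
    set Mat : Matrix (↥J ⊕ Fin i) (Fin d) ℝ := fun s p =>
      Sum.rec (fun (j : ↥J) => Cc j.1 ⬝ᵥ v (Fin.castLE hdn p))
        (fun (q : Fin i) => vZ (Fin.castLE (by omega) q) ⬝ᵥ v (Fin.castLE hdn p)) s with hMat
    obtain ⟨α, hα0, hαker⟩ : ∃ α : Fin d → ℝ, α ≠ 0 ∧ Mat *ᵥ α = 0 := by
      by_contra hcon
      push_neg at hcon
      have hinj : Function.Injective Mat.mulVecLin := by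
        rw [← LinearMap.ker_eq_bot, Submodule.eq_bot_iff]
        intro α hα
        by_contra hne
        exact hcon α hne (by rwa [LinearMap.mem_ker, Matrix.mulVecLin_apply] at hα)
      have hle := LinearMap.finrank_le_finrank_of_injective hinj
      rw [Module.finrank_pi, Module.finrank_pi] at hle
      rw [Fintype.card_sum, Fintype.card_coe, Fintype.card_fin, Fintype.card_fin] at hle
      omega
    set w : Fin n → ℝ := ∑ p : Fin d, α p • v (Fin.castLE hdn p) with hw
    have hconstraint : ∀ s, ∑ p, Mat s p * α p = 0 := by
      intro s
      have := congrFun hαker s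
      rwa [Matrix.mulVec, dotProduct] at this
    have hCw : ∀ j ∈ J, Cc j ⬝ᵥ w = 0 := by
      intro j hj
      rw [hw, dot_finsum_right]
      have := hconstraint (Sum.inl ⟨j, hj⟩)
      rw [← this]
      refine Finset.sum_congr rfl (fun p _ => ?_)
      rw [dotProduct_smul]
      simp only [hMat, smul_eq_mul]
      ring
    have hvZw : ∀ (q : Fin i), vZ (Fin.castLE (by omega) q) ⬝ᵥ w = 0 := by
      intro q
      rw [hw, dot_finsum_right]
      have := hconstraint (Sum.inr q)
      rw [← this]
      refine Finset.sum_congr rfl (fun p _ => ?_)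
      rw [dotProduct_smul]
      simp only [hMat, smul_eq_mul]
      ring
    -- norms
    have hvsub : ∀ p p' : Fin d, p ≠ p' →
        v (Fin.castLE hdn p) ⬝ᵥ v (Fin.castLE hdn p') = 0 := by
      intro p p' hne
      rw [hvortho, if_neg (fun hcon => hne (Fin.castLE_injective _ hcon))]
    have hww : w ⬝ᵥ w = ∑ p : Fin d, (α p)^2 := by
      rw [hw, dot_sum_pair _ _ _ hvsub]
      refine Finset.sum_congr rfl (fun p _ => ?_)
      rw [hvortho, if_pos rfl, mul_one, sq]
    have hwpos : 0 < w ⬝ᵥ w := by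
      rw [hww]
      obtain ⟨p, hp⟩ := Function.ne_iff.mp hα0
      exact Finset.sum_pos' (fun p _ => sq_nonneg _)
        ⟨p, Finset.mem_univ p, lt_of_le_of_ne (sq_nonneg _) (Ne.symm (pow_ne_zero 2 hp))⟩
    have hXw : X *ᵥ w = ∑ p : Fin d, (α p * σ (Fin.castLE hdn p)) • u (Fin.castLE hdn p) := by
      rw [hw, mulVec_sum']
      refine Finset.sum_congr rfl (fun p _ => ?_)
      rw [Matrix.mulVec_smul, hXvu, smul_smul]
    have husub : ∀ p p' : Fin d, p ≠ p' →
        u (Fin.castLE hdn p) ⬝ᵥ u (Fin.castLE hdn p') = 0 := by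
      intro p p' hne
      rw [huortho, if_neg (by rintro ⟨hcon, _⟩; exact hne (Fin.castLE_injective _ hcon))]
    have hXw2 : (X *ᵥ w) ⬝ᵥ (X *ᵥ w) = ∑ p : Fin d, (α p)^2 * (σ (Fin.castLE hdn p))^2 := by
      rw [hXw, dot_sum_pair _ _ _ husub]
      refine Finset.sum_congr rfl (fun p _ => ?_)
      rw [huortho]
      by_cases h : σ (Fin.castLE hdn p) = 0
      · rw [h]
        rw [if_neg (by rintro ⟨_, hcon⟩; exact hcon rfl)]
        ring
      · rw [if_pos ⟨rfl, h⟩]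
        ring
    have hXw2low : (σ ⟨l+i, hln⟩)^2 * (w ⬝ᵥ w) ≤ (X *ᵥ w) ⬝ᵥ (X *ᵥ w) := by
      rw [hXw2, hww, Finset.mul_sum]
      refine Finset.sum_le_sum (fun p _ => ?_)
      have hple : (Fin.castLE hdn p) ≤ (⟨l+i, hln⟩ : Fin n) := by
        simp only [Fin.le_def, Fin.coe_castLE]
        omega
      have h1 : σ ⟨l+i, hln⟩ ≤ σ (Fin.castLE hdn p) := hσanti _ _ hple
      have h2 : (σ ⟨l+i, hln⟩)^2 ≤ (σ (Fin.castLE hdn p))^2 :=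
        pow_le_pow_left₀ (hσ0 _) h1 2
      calc (σ ⟨l+i, hln⟩)^2 * (α p)^2 ≤ (σ (Fin.castLE hdn p))^2 * (α p)^2 :=
            mul_le_mul_of_nonneg_right h2 (sq_nonneg _)
        _ = (α p)^2 * (σ (Fin.castLE hdn p))^2 := by ring
    have hYw : Y *ᵥ w = 0 := by
      rw [hY, finsum_mulVec]
      refine Finset.sum_eq_zero (fun j hj => ?_)
      rw [vecMulVec_mulVec', hCw j hj, zero_smul]
    have hZw : Z *ᵥ w = X *ᵥ w := by
      rw [hXYZ, Matrix.add_mulVec, hYw, zero_add]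
    -- expansion of Z *ᵥ w in Z's singular vectors
    have hZwexp : Z *ᵥ w = ∑ s : Fin n, ((vZ s ⬝ᵥ w) * τ s) • uZ s := by
      conv_lhs => rw [show w = ∑ s : Fin n, (vZ s ⬝ᵥ w) • vZ s from (hexpZ w).symm]
      rw [mulVec_sum']
      refine Finset.sum_congr rfl (fun s _ => ?_)
      rw [Matrix.mulVec_smul, hZvu, smul_smul]
    have huZsub : ∀ s s' : Fin n, s ≠ s' → uZ s ⬝ᵥ uZ s' = 0 := by
      intro s s' hne
      rw [huZortho, if_neg (by rintro ⟨hcon, _⟩; exact hne hcon)]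
    have hZw2 : (Z *ᵥ w) ⬝ᵥ (Z *ᵥ w) = ∑ s : Fin n, (vZ s ⬝ᵥ w)^2 * (τ s)^2 := by
      rw [hZwexp, dot_sum_pair _ _ _ huZsub]
      refine Finset.sum_congr rfl (fun s _ => ?_)
      rw [huZortho]
      by_cases h : τ s = 0
      · rw [h, if_neg (by rintro ⟨_, hcon⟩; exact hcon rfl)]
        ring
      · rw [if_pos ⟨rfl, h⟩]
        ring
    have hparseval : ∑ s : Fin n, (vZ s ⬝ᵥ w)^2 = w ⬝ᵥ w := by
      have h1 : w ⬝ᵥ (∑ s : Fin n, (vZ s ⬝ᵥ w) • vZ s) = w ⬝ᵥ w := by rw [hexpZ w]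
      rw [← h1, dot_finsum_right]
      refine Finset.sum_congr rfl (fun s _ => ?_)
      rw [dotProduct_smul, dotProduct_comm w]
      simp only [smul_eq_mul, sq]
    have hτi : (0:ℝ) ≤ τ ⟨i, by omega⟩ := hτ0 _
    have hZw2up : (Z *ᵥ w) ⬝ᵥ (Z *ᵥ w) ≤ (τ ⟨i, by omega⟩)^2 * (w ⬝ᵥ w) := by
      rw [hZw2, ← hparseval, Finset.mul_sum]
      refine Finset.sum_le_sum (fun s _ => ?_)
      by_cases hs : (s:ℕ) < i
      · have hz : vZ s ⬝ᵥ w = 0 := by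
          have h0 := hvZw ⟨(s:ℕ), hs⟩
          have he : Fin.castLE (by omega) (⟨(s:ℕ), hs⟩ : Fin i) = s := Fin.ext rfl
          rwa [he] at h0
        rw [hz]
        simp
      · have hle : (⟨i, by omega⟩ : Fin n) ≤ s := by
          simp only [Fin.le_def]
          omega
        have h1 : τ s ≤ τ ⟨i, by omega⟩ := hτanti _ _ hle
        have h2 : (τ s)^2 ≤ (τ ⟨i, by omega⟩)^2 := pow_le_pow_left₀ (hτ0 _) h1 2
        calc (vZ s ⬝ᵥ w)^2 * (τ s)^2 ≤ (vZ s ⬝ᵥ w)^2 * (τ ⟨i, by omega⟩)^2 :=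
              mul_le_mul_of_nonneg_left h2 (sq_nonneg _)
          _ = (τ ⟨i, by omega⟩)^2 * (vZ s ⬝ᵥ w)^2 := by ring
    -- combine
    have hsq : (σ ⟨l+i, hln⟩)^2 ≤ (τ ⟨i, by omega⟩)^2 := by
      have h1 : (σ ⟨l+i, hln⟩)^2 * (w ⬝ᵥ w) ≤ (τ ⟨i, by omega⟩)^2 * (w ⬝ᵥ w) := by
        calc (σ ⟨l+i, hln⟩)^2 * (w ⬝ᵥ w) ≤ (X *ᵥ w) ⬝ᵥ (X *ᵥ w) := hXw2low
          _ = (Z *ᵥ w) ⬝ᵥ (Z *ᵥ w) := by rw [hZw]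
          _ ≤ _ := hZw2up
      exact le_of_mul_le_mul_right h1 hwpos
    have := Real.sqrt_le_sqrt hsq
    rwa [Real.sqrt_sq (hσ0 _), Real.sqrt_sq hτi] at this
  -- Step C : assemble the cap inequality
  have hJt : ∑ j ∈ J, min (r j) t = l * t := by
    have h1 : ∑ j ∈ J, min (r j) t = ∑ j ∈ J, t :=
      Finset.sum_congr rfl (fun j hj => by
        rw [hJ, Finset.mem_filter] at hj
        exact min_eq_right (le_of_lt hj.2))
    rw [h1, Finset.sum_const, nsmul_eq_mul]
  have hJ2t : ∑ j ∈ J2, min (r j) t = ∑ j ∈ J2, r j := by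
    refine Finset.sum_congr rfl (fun j hj => ?_)
    rw [hJ2, Finset.mem_filter] at hj
    exact min_eq_left (not_lt.mp hj.2)
  have hRHS : ∑ j : Fin k, min (r j) t = l * t + ∑ j ∈ J2, r j := by
    rw [← Finset.sum_filter_add_sum_filter_not Finset.univ (fun j => t < r j)
      (fun j => min (r j) t)]
    rw [← hJ, ← hJ2, hJt, hJ2t]
  -- split of the left sum
  have hLHS : ∑ i : Fin n, min (σ i) t ≤ l * t + ∑ i : Fin n, τ i := by
    rw [← Finset.sum_filter_add_sum_filter_not Finset.univ (fun i : Fin n => (i:ℕ) < l)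
      (fun i => min (σ i) t)]
    have hpart1 : ∑ i ∈ Finset.univ.filter (fun i : Fin n => (i:ℕ) < l), min (σ i) t
        ≤ l * t := by
      calc ∑ i ∈ Finset.univ.filter (fun i : Fin n => (i:ℕ) < l), min (σ i) t
          ≤ ∑ i ∈ Finset.univ.filter (fun i : Fin n => (i:ℕ) < l), t :=
            Finset.sum_le_sum (fun i _ => min_le_right _ _)
        _ = (Finset.univ.filter (fun i : Fin n => (i:ℕ) < l)).card * t := by
            rw [Finset.sum_const, nsmul_eq_mul]
        _ ≤ l * t := by
            apply mul_le_mul_of_nonneg_right _ ht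
            have hcard : (Finset.univ.filter (fun i : Fin n => (i:ℕ) < l)).card ≤ l := by
              have h2 := Finset.card_le_card_of_injOn
                (s := Finset.univ.filter (fun i : Fin n => (i:ℕ) < l))
                (t := Finset.range l) (fun i : Fin n => (i:ℕ))
                (fun i hi => by
                  rw [Finset.mem_coe, Finset.mem_filter] at hi
                  rw [Finset.mem_coe, Finset.mem_range]
                  exact hi.2)
                (fun i _ i' _ hee => Fin.ext hee)
              rwa [Finset.card_range] at h2
            exact_mod_cast Nat.cast_le.mpr hcard
    have hpart2 : ∑ i ∈ Finset.univ.filter (fun i : Fin n => ¬ (i:ℕ) < l), min (σ i) t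
        ≤ ∑ i : Fin n, τ i := by
      set S := Finset.univ.filter (fun i : Fin n => ¬ (i:ℕ) < l) with hS
      set φ : Fin n → Fin n := fun i => ⟨(i:ℕ) - l, by omega⟩ with hφ
      have hstep : ∀ i ∈ S, min (σ i) t ≤ τ (φ i) := by
        intro i hi
        rw [hS, Finset.mem_filter] at hi
        have hli : l ≤ (i:ℕ) := not_lt.mp hi.2
        have h1 : min (σ i) t ≤ σ i := min_le_left _ _
        have h2 : σ i = σ ⟨l + ((i:ℕ) - l), by omega⟩ := by
          congr 1
          exact Fin.ext (by simp; omega)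
        have h3 := hstepB ((i:ℕ) - l) (show l + ((i:ℕ) - l) < n by omega)
        calc min (σ i) t ≤ σ i := h1
          _ = _ := h2
          _ ≤ τ ⟨(i:ℕ) - l, by omega⟩ := h3
          _ = τ (φ i) := rfl
      calc ∑ i ∈ S, min (σ i) t ≤ ∑ i ∈ S, τ (φ i) := Finset.sum_le_sum hstep
        _ = ∑ i ∈ S.image φ, τ i := by
            rw [Finset.sum_image]
            intro i hi i' hi' hee
            rw [Finset.mem_coe, hS, Finset.mem_filter] at hi hi'
            have := congrArg (fun z : Fin n => (z:ℕ)) hee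
            simp only [hφ] at this
            exact Fin.ext (by omega)
        _ ≤ ∑ i : Fin n, τ i :=
            Finset.sum_le_sum_of_subset_of_nonneg (Finset.subset_univ _)
              (fun i _ _ => hτ0 i)
    linarith
  calc ∑ i : Fin n, min (σ i) t ≤ l * t + ∑ i : Fin n, τ i := hLHS
    _ ≤ l * t + ∑ j ∈ J2, r j := by linarith [hstepA]
    _ = ∑ j : Fin k, min (r j) t := hRHS.symm

end LB

/-- For `f` concave, non-decreasing on `[0,∞)` with `f 0 = 0`, and any
`k ≥ rank X`, the value `R(X) = Σᵢ f (σᵢ(X))` is the attained minimum of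
`Σᵢ f (‖Bᵢ‖ ‖Cᵢ‖)` over all factorizations `X = B Cᵀ` with `k` columns. -/
theorem bilinear_parameterization_colNorm_prod {m n k : ℕ} (f : ℝ → ℝ)
    (hconc : ConcaveOn ℝ (Set.Ici 0) f) (hmono : MonotoneOn f (Set.Ici 0))
    (hf0 : f 0 = 0) (X : Matrix (Fin m) (Fin n) ℝ) (hk : X.rank ≤ k) :
    IsLeast { s : ℝ | ∃ (B : Matrix (Fin m) (Fin k) ℝ) (C : Matrix (Fin n) (Fin k) ℝ),
        B * Cᵀ = X ∧ s = ∑ i, f (colNorm B i * colNorm C i) }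
      (regR f X) := by
  constructor
  · obtain ⟨B, C, h1, h2⟩ := membership_part f hf0 X hk
    exact ⟨B, C, h1, h2⟩
  · rintro s ⟨B, C, hBC, rfl⟩
    exact lower_bound_part f hconc hmono hf0 X B C hBC
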